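/- Let X, Z be real Banach spaces and Y a closed subspace of Z with property-(SU) in Z. If S : X → Y* is a linear isometry, viewed as a functional on X ⊗̂_π Y, then S has a unique norm-preserving extension to X ⊗̂_π Z. -/

import Mathlib

open NormedSpace Metric Set

namespace Paper

variable {X : Type*} [NormedAddCommGroup X] [NormedSpace ℝ X]

/-- The restriction of a continuous linear functional to a subspace. -/
noncomputable def restr (Y : Submodule ℝ X) (f : StrongDual ℝ X) : StrongDual ℝ ↥Y :=
  f.comp Y.subtypeL

/-- The annihilator `Y⊥` of a subspace `Y` in the dual. -/
def ann (Y : Submodule ℝ X) : Set (StrongDual ℝ X) := {f | ∀ y ∈ Y, f y = 0}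

/-- The set of norm-preserving (Hahn–Banach) extensions of `g : Y* ` to `X`. -/
def HB (Y : Submodule ℝ X) (g : StrongDual ℝ ↥Y) : Set (StrongDual ℝ X) :=
  {f | (∀ y : Y, f (y : X) = g y) ∧ ‖f‖ = ‖g‖}

/-- Best approximations to `x` from a set `A`. -/
def bestApprox {E : Type*} [NormedAddCommGroup E] (A : Set E) (x : E) : Set E :=
  {z ∈ A | ‖x - z‖ = infDist x A}

/-- Property-(U): every functional on `Y` has a unique norm-preserving extension to `X`. -/
def propU (Y : Submodule ℝ X) : Prop :=
  ∀ g : StrongDual ℝ ↥Y, ∃! f : StrongDual ℝ X, f ∈ HB Y g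

/-- `Y# `: the set of functionals whose norm equals the norm of their restriction to `Y`. -/
def sharp (Y : Submodule ℝ X) : Set (StrongDual ℝ X) := {f | ‖f‖ = ‖restr Y f‖}

/-- Property-(HB), stated via the decomposition `X* = Y# ⊕ Y⊥`. -/
def propHB (Y : Submodule ℝ X) : Prop :=
  (∀ f ∈ sharp Y, ∀ g ∈ sharp Y, f + g ∈ sharp Y) ∧
  (∀ (c : ℝ), ∀ f ∈ sharp Y, c • f ∈ sharp Y) ∧
  (∀ f : StrongDual ℝ X, ∃ g ∈ sharp Y, ∃ h ∈ ann Y, f = g + h) ∧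
  (∀ g ∈ sharp Y, ∀ h ∈ ann Y, h ≠ 0 → ‖g‖ < ‖g + h‖ ∧ ‖h‖ ≤ ‖g + h‖)

end Paper

open Paper

namespace Paper

/-- Property-(SU): there is a contractive projection `P` of the dual onto `Y⊥` such that
`‖g + h‖ > ‖g‖` whenever `g ∈ G = (I − P)(X*)` and `0 ≠ h ∈ Y⊥`. -/
def propSU {X : Type*} [NormedAddCommGroup X] [NormedSpace ℝ X] (Y : Submodule ℝ X) : Prop :=
  ∃ P : StrongDual ℝ X →L[ℝ] StrongDual ℝ X,
    (∀ f : StrongDual ℝ X, P f ∈ ann Y) ∧ (∀ h ∈ ann Y, P h = h) ∧ ‖P‖ ≤ 1 ∧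
    ∀ f : StrongDual ℝ X, ∀ h ∈ ann Y, h ≠ 0 → ‖f - P f‖ < ‖(f - P f) + h‖

end Paper

/-- if `Y` has property-(SU) in `Z` and `S : X → Y*` is a linear isometry,
viewed (via `(X ⊗̂_π Y)* ≅ L(X, Y*)`) as a functional on `X ⊗̂_π Y`, then `S` has a unique
norm-preserving extension to `X ⊗̂_π Z`, i.e. there is a unique `T ∈ L(X, Z*) ≅ (X ⊗̂_π Z)*`
with `T x∣_Y = S x` for all `x` and `‖T‖ = ‖S‖`. -/
theorem stmt9 {X Z : Type*} [NormedAddCommGroup X] [NormedSpace ℝ X] [CompleteSpace X]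
    [NormedAddCommGroup Z] [NormedSpace ℝ Z] [CompleteSpace Z]
    (Y : Submodule ℝ Z) (hYc : IsClosed (Y : Set Z)) (hSU : propSU Y)
    (S : X →L[ℝ] StrongDual ℝ ↥Y) (hiso : ∀ x : X, ‖S x‖ = ‖x‖) :
    ∃! T : X →L[ℝ] StrongDual ℝ Z,
      (∀ x : X, ∀ y : Y, T x (y : Z) = S x y) ∧ ‖T‖ =
        @norm _ (@ContinuousLinearMap.hasOpNorm ℝ ℝ X (StrongDual ℝ ↥Y) _ _ _ _ _ _ (RingHom.id ℝ)) S := by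
  letI : NormedAddCommGroup (StrongDual ℝ ↥Y) := inferInstance
  letI : NormedSpace ℝ (StrongDual ℝ ↥Y) := inferInstance
  obtain ⟨P, hPann, hPfix, hPnorm, hPstrict⟩ := hSU
  -- restriction does not increase norm
  have hrestr_le : ∀ (g : StrongDual ℝ ↥Y) (f : StrongDual ℝ Z),
      (∀ y : Y, f (y : Z) = g y) → ‖g‖ ≤ ‖f‖ := by
    intro g f hf
    have hg : restr Y f = g := by
      ext y; simpa [restr] using hf y
    calc ‖g‖ = ‖restr Y f‖ := by rw [hg]
      _ ≤ ‖f‖ * ‖Y.subtypeL‖ := ContinuousLinearMap.opNorm_comp_le _ _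
      _ ≤ ‖f‖ * 1 := by
          gcongr
          exact Y.subtypeL.opNorm_le_bound zero_le_one (by simp)
      _ = ‖f‖ := mul_one _
  -- any norm-preserving extension lies in ker P
  have np0 : ∀ (g : StrongDual ℝ ↥Y) (f : StrongDual ℝ Z),
      (∀ y : Y, f (y : Z) = g y) → ‖f‖ = ‖g‖ → P f = 0 := by
    intro g f hext hnorm
    by_contra h0
    have h1 := hPstrict f (P f) (hPann f) h0
    have h2 : f - P f + P f = f := by abel
    rw [h2, hnorm] at h1
    have h3 : ‖g‖ ≤ ‖f - P f‖ := by
      apply hrestr_le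
      intro y
      have hz : P f (y : Z) = 0 := hPann f (y : Z) y.2
      simp [hz, hext y]
    linarith
  -- two extensions in ker P agreeing on Y coincide
  have uniq0 : ∀ f₁ f₂ : StrongDual ℝ Z, P f₁ = 0 → P f₂ = 0 →
      (∀ y : Y, f₁ (y : Z) = f₂ (y : Z)) → f₁ = f₂ := by
    intro f₁ f₂ h₁ h₂ hagree
    have hannd : (f₁ - f₂) ∈ ann Y := by
      intro z hz
      have := hagree ⟨z, hz⟩
      simp [this]
    have hfix := hPfix _ hannd
    rw [map_sub, h₁, h₂, sub_zero] at hfix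
    have : f₁ - f₂ = 0 := hfix.symm
    exact sub_eq_zero.mp this
  -- existence of a norm-preserving extension with P f = 0
  have key : ∀ g : StrongDual ℝ ↥Y, ∃ f : StrongDual ℝ Z, P f = 0 ∧
      (∀ y : Y, f (y : Z) = g y) ∧ ‖f‖ = ‖g‖ := by
    intro g
    obtain ⟨f₀, hext, hnorm⟩ := exists_extension_norm_eq Y g
    exact ⟨f₀, np0 g f₀ (fun y => hext y) hnorm,
      fun y => hext y, hnorm⟩
  choose F hF0 hFext hFnorm using key
  -- build T
  have hadd : ∀ x₁ x₂ : X, F (S (x₁ + x₂)) = F (S x₁) + F (S x₂) := by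
    intro x₁ x₂
    apply uniq0 _ _ (hF0 _)
    · rw [map_add, hF0, hF0, add_zero]
    · intro y
      rw [hFext]
      simp [hFext (S x₁) y, hFext (S x₂) y]
  have hsmul : ∀ (c : ℝ) (x : X), F (S (c • x)) = c • F (S x) := by
    intro c x
    apply uniq0 _ _ (hF0 _)
    · rw [map_smul, hF0, smul_zero]
    · intro y
      rw [hFext]
      simp [hFext (S x) y]
  let T₀ : X →ₗ[ℝ] StrongDual ℝ Z :=
    { toFun := fun x => F (S x)
      map_add' := hadd
      map_smul' := hsmul }
  have hbound : ∀ x : X, ‖T₀ x‖ ≤ ‖S‖ * ‖x‖ := by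
    intro x
    show ‖F (S x)‖ ≤ ‖S‖ * ‖x‖
    rw [hFnorm]
    exact S.le_opNorm x
  let T : X →L[ℝ] StrongDual ℝ Z := T₀.mkContinuous ‖S‖ hbound
  have hTapp : ∀ x : X, T x = F (S x) := fun _ => rfl
  refine ⟨T, ⟨fun x y => by rw [hTapp]; exact hFext (S x) y, ?_⟩, ?_⟩
  · apply le_antisymm
    · exact T₀.mkContinuous_norm_le (norm_nonneg S) hbound
    · apply S.opNorm_le_bound (norm_nonneg T)
      intro x
      rw [← hFnorm (S x), ← hTapp]
      exact T.le_opNorm x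
  · rintro T' ⟨hTe, hTn⟩
    have hSle : ‖S‖ ≤ 1 :=
      S.opNorm_le_bound zero_le_one (fun x => by rw [hiso, one_mul])
    have h1 : ∀ x : X, ‖T' x‖ = ‖S x‖ := by
      intro x
      apply le_antisymm
      · calc ‖T' x‖ ≤ ‖T'‖ * ‖x‖ := T'.le_opNorm x
          _ = ‖S‖ * ‖x‖ := by rw [hTn]
          _ ≤ 1 * ‖x‖ := by gcongr
          _ = ‖x‖ := one_mul _
          _ = ‖S x‖ := (hiso x).symm
      · exact hrestr_le (S x) (T' x) (hTe x)
    ext x z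
    have hP := np0 (S x) (T' x) (hTe x) (h1 x)
    have heq := uniq0 (T' x) (F (S x)) hP (hF0 (S x))
      (fun y => by rw [hTe x y, hFext (S x) y])
    rw [heq, ← hTapp]
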